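/- Let G = (V,E) be a finite simple graph with vertex set V = {1,…,N}, let d ≥ 1, and let H ∈ M_d(ℂ) satisfy H†H = d·I, H = Hᵀ, and |H_{ij}| = 1 for all i, j. Let C^H be the diagonal unitary on ℂ^d ⊗ ℂ^d with C^H(e_i ⊗ e_j) = H_{ij}·(e_i ⊗ e_j); for an edge {i,j} ∈ E, let C^H_{ij} denote C^H applied to tensor factors i and j of (ℂ^d)^{⊗N} (all such operators commute, being diagonal). Set U_G = ∏_{{i,j}∈E} C^H_{ij}, |+⟩ = d^{−1/2} H e_0 ∈ ℂ^d (a unit vector), and define the graph state |G⟩ = U_G |+⟩^{⊗N}. For each vertex i let 𝒩_i = {i} ∪ {j : {i,j} ∈ E}. Then |G⟩ is RFTS with respect to 𝒩 = {𝒩_i}_{i∈V}: the CPTP maps E_i(ρ) = U_G [ ((|+⟩⟨+| Tr)_i ⊗ Id_{{i}^c}) ( U_G† ρ U_G ) ] U_G† are 𝒩_i-neighborhood maps, each satisfies E_i(|G⟩⟨G|) = |G⟩⟨G|, and the composition of the N maps E_1,…,E_N in any order sends every density matrix to |G⟩⟨G|. -/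

import Mathlib

open scoped BigOperators Matrix ComplexOrder

namespace QLS

variable {N : ℕ}

/-- Index type of the full multipartite Hilbert space `⊗ᵢ ℂ^{d i}`. -/
abbrev Idx (d : Fin N → ℕ) : Type := ∀ i, Fin (d i)

/-- Index type of the Hilbert space `⊗_{i ∈ S} ℂ^{d i}` of a subset `S` of subsystems. -/
abbrev SIdx (d : Fin N → ℕ) (S : Finset (Fin N)) : Type := ∀ i : S, Fin (d i)

/-- Merge an index on `S` and an index on `Sᶜ` into a global index. -/
def merge (d : Fin N → ℕ) (S : Finset (Fin N)) (u : SIdx d S) (w : SIdx d Sᶜ) : Idx d :=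
  fun i => if h : i ∈ S then u ⟨i, h⟩ else w ⟨i, Finset.mem_compl.mpr h⟩

/-- Partial trace over the complement of `S`: `Tr_{Sᶜ}`. -/
noncomputable def ptrace (d : Fin N → ℕ) (S : Finset (Fin N))
    (M : Matrix (Idx d) (Idx d) ℂ) : Matrix (SIdx d S) (SIdx d S) ℂ :=
  fun u v => ∑ w : SIdx d Sᶜ, M (merge d S u w) (merge d S v w)

/-- `X` acts only on the subsystems in `S`, i.e. `X = Y ⊗ I_{Sᶜ}`. -/
def ActsOn (d : Fin N → ℕ) (S : Finset (Fin N)) (X : Matrix (Idx d) (Idx d) ℂ) : Prop :=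
  ∃ Y : Matrix (SIdx d S) (SIdx d S) ℂ, ∀ (u u' : SIdx d S) (w w' : SIdx d Sᶜ),
    X (merge d S u w) (merge d S u' w') = if w = w' then Y u u' else 0

/-- The rank-one projector `|ψ⟩⟨ψ|`. -/
noncomputable def proj (d : Fin N → ℕ) (ψ : Idx d → ℂ) : Matrix (Idx d) (Idx d) ℂ :=
  fun a b => ψ a * (starRingEnd ℂ) (ψ b)

/-- `ψ` is a unit vector. -/
def IsUnitVec (d : Fin N → ℕ) (ψ : Idx d → ℂ) : Prop :=
  ∑ a, Complex.normSq (ψ a) = 1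

/-- Superoperators on the multipartite space. -/
abbrev Sop (d : Fin N → ℕ) : Type :=
  Matrix (Idx d) (Idx d) ℂ →ₗ[ℂ] Matrix (Idx d) (Idx d) ℂ

/-- `E` is completely positive and trace preserving (Kraus form). -/
def IsCPTP (d : Fin N → ℕ) (E : Sop d) : Prop :=
  ∃ (m : ℕ) (K : Fin m → Matrix (Idx d) (Idx d) ℂ),
    (∀ ρ, E ρ = ∑ i, K i * ρ * (K i)ᴴ) ∧ (∑ i, (K i)ᴴ * K i = 1)

/-- `E` is a CPTP map whose Kraus operators all act only on `S`. -/
def IsNeighborhoodMap (d : Fin N → ℕ) (S : Finset (Fin N)) (E : Sop d) : Prop :=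
  ∃ (m : ℕ) (K : Fin m → Matrix (Idx d) (Idx d) ℂ),
    (∀ i, ActsOn d S (K i)) ∧
    (∀ ρ, E ρ = ∑ i, K i * ρ * (K i)ᴴ) ∧ (∑ i, (K i)ᴴ * K i = 1)

/-- A density matrix. -/
def IsDensity (d : Fin N → ℕ) (ρ : Matrix (Idx d) (Idx d) ℂ) : Prop :=
  ρ.PosSemidef ∧ ρ.trace = 1

/-- Sequential composition `E_{T-1} ∘ ⋯ ∘ E_1 ∘ E_0` (index `0` applied first). -/
def seqComp {V : Type*} [AddCommMonoid V] [Module ℂ V] :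
    ∀ {T : ℕ}, (Fin T → (V →ₗ[ℂ] V)) → (V →ₗ[ℂ] V)
  | 0, _ => LinearMap.id
  | T + 1, E => E (Fin.last T) ∘ₗ seqComp fun t => E t.castSucc

/-- Finite-time stabilizability of `ψ` w.r.t. the neighborhood structure `𝒩`. -/
def FTS (d : Fin N → ℕ) {K : ℕ} (𝒩 : Fin K → Finset (Fin N)) (ψ : Idx d → ℂ) : Prop :=
  ∃ (T : ℕ) (E : Fin T → Sop d),
    (∀ t, ∃ k, IsNeighborhoodMap d (𝒩 k) (E t)) ∧
    (∀ t, E t (proj d ψ) = proj d ψ) ∧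
    (∀ σ, IsDensity d σ → seqComp E σ = proj d ψ)

/-- Robust finite-time stabilizability: any ordering of the maps prepares `ψ`. -/
def RFTS (d : Fin N → ℕ) {K : ℕ} (𝒩 : Fin K → Finset (Fin N)) (ψ : Idx d → ℂ) : Prop :=
  ∃ (T : ℕ) (E : Fin T → Sop d),
    (∀ t, ∃ k, IsNeighborhoodMap d (𝒩 k) (E t)) ∧
    (∀ t, E t (proj d ψ) = proj d ψ) ∧
    (∀ π : Equiv.Perm (Fin T), ∀ σ, IsDensity d σ → seqComp (fun t => E (π t)) σ = proj d ψ)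

/-- The Schmidt span of `ψ` on `S`: the range of the reduced state `Tr_{Sᶜ}|ψ⟩⟨ψ|`. -/
noncomputable def schmidtSpan (d : Fin N → ℕ) (S : Finset (Fin N)) (ψ : Idx d → ℂ) :
    Submodule ℂ (SIdx d S → ℂ) :=
  LinearMap.range (Matrix.mulVecLin (ptrace d S (proj d ψ)))

/-- Slicing a global vector along a fixed index of `Sᶜ` (linear in the vector). -/
def sliceMap (d : Fin N → ℕ) (S : Finset (Fin N)) (w : SIdx d Sᶜ) :
    (Idx d → ℂ) →ₗ[ℂ] (SIdx d S → ℂ) where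
  toFun v := fun u => v (merge d S u w)
  map_add' _ _ := rfl
  map_smul' _ _ := rfl

/-- The extended Schmidt span `Σ̄_S(ψ) = Σ_S(ψ) ⊗ H_{Sᶜ}`, described as the set of vectors
all of whose slices along `Sᶜ` lie in the Schmidt span. -/
noncomputable def extSchmidtSpan (d : Fin N → ℕ) (S : Finset (Fin N)) (ψ : Idx d → ℂ) :
    Submodule ℂ (Idx d → ℂ) :=
  ⨅ w : SIdx d Sᶜ, (schmidtSpan d S ψ).comap (sliceMap d S w)

/-- `P` is the orthogonal projection matrix onto the subspace `V` (Hermitian idempotent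
with range `V`). -/
def IsOrthProjOnto {ι : Type*} [Fintype ι] [DecidableEq ι]
    (P : Matrix ι ι ℂ) (V : Submodule ℂ (ι → ℂ)) : Prop :=
  Pᴴ = P ∧ P * P = P ∧ LinearMap.range P.mulVecLin = V

/-- The neighborhood expansion `A^𝒩` of a set of subsystems. -/
def expand {K : ℕ} (𝒩 : Fin K → Finset (Fin N)) (A : Finset (Fin N)) : Finset (Fin N) :=
  Finset.univ.biUnion fun k => if (𝒩 k ∩ A).Nonempty then 𝒩 k else ∅

/-- Standard sesquilinear dot product. -/
noncomputable def dotc {ι : Type*} [Fintype ι] (u v : ι → ℂ) : ℂ :=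
  ∑ a, (starRingEnd ℂ) (u a) * v a

/-- Slicing a global vector along a single site `i`, other coordinates fixed by `a`. -/
def sliceAt (d : Fin N → ℕ) (i : Fin N) (a : Idx d) :
    (Idx d → ℂ) →ₗ[ℂ] (Fin (d i) → ℂ) where
  toFun v := fun x => v (Function.update a i x)
  map_add' _ _ := rfl
  map_smul' _ _ := rfl

/-- The tensor product `⊗ᵢ tᵢ` of local subspaces, as a subspace of the global space:
the set of vectors all of whose single-site slices lie in the local subspaces. -/
noncomputable def tensorSub (d : Fin N → ℕ) (t : ∀ i, Submodule ℂ (Fin (d i) → ℂ)) :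
    Submodule ℂ (Idx d → ℂ) :=
  ⨅ i, ⨅ a : Idx d, (t i).comap (sliceAt d i a)

open Classical in
/-- The operator `X` on the `j`-th factor, amplified by the identity on all other factors. -/
noncomputable def factorMat {M : ℕ} (m : Fin M → ℕ) (j : Fin M)
    (X : Matrix (Fin (m j)) (Fin (m j)) ℂ) :
    Matrix (∀ l, Fin (m l)) (∀ l, Fin (m l)) ℂ :=
  fun a b => if (∀ l, l ≠ j → a l = b l) then X (a j) (b j) else 0

/-- Partial trace onto a single site `i`. -/
noncomputable def ptrace1 (d : Fin N → ℕ) (i : Fin N) (M : Matrix (Idx d) (Idx d) ℂ) :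
    Matrix (Fin (d i)) (Fin (d i)) ℂ :=
  fun x y => ∑ a : Idx d, if a i = x then M a (Function.update a i y) else 0

/-- Local support `H̃ᵢ`: the range of the single-site reduced state of `ψ`. -/
noncomputable def localSupp (d : Fin N → ℕ) (ψ : Idx d → ℂ) (i : Fin N) :
    Submodule ℂ (Fin (d i) → ℂ) :=
  LinearMap.range (Matrix.mulVecLin (ptrace1 d i (proj d ψ)))

/-- Set of skew-Hermitian matrices commuting with `|ψ⟩⟨ψ|` (the Lie algebra `u_ψ`). -/
noncomputable def stabSet (d : Fin N → ℕ) (ψ : Idx d → ℂ) :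
    Set (Matrix (Idx d) (Idx d) ℂ) :=
  {X | Xᴴ = -X ∧ X * proj d ψ = proj d ψ * X}

/-- The Lie algebra `u_{𝒩ₖ,ψ}` of skew-Hermitian stabilizers acting only on `S`. -/
noncomputable def nstabSet (d : Fin N → ℕ) (S : Finset (Fin N)) (ψ : Idx d → ℂ) :
    Set (Matrix (Idx d) (Idx d) ℂ) :=
  {X | (Xᴴ = -X ∧ X * proj d ψ = proj d ψ * X) ∧ ActsOn d S X}

attribute [local instance] LieRing.ofAssociativeRing in
/-- The unitary generation property: the real Lie algebra generated by the
neighborhood stabilizer algebras is the full stabilizer algebra `u_ψ`. -/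
noncomputable def UnitaryGenProp (d : Fin N → ℕ) {K : ℕ} (𝒩 : Fin K → Finset (Fin N))
    (ψ : Idx d → ℂ) : Prop :=
  ((LieSubalgebra.lieSpan ℝ (Matrix (Idx d) (Idx d) ℂ)
      (⋃ k, nstabSet d (𝒩 k) ψ)) : Set (Matrix (Idx d) (Idx d) ℂ)) = stabSet d ψ

/-- The unitary stabilizer group `U_ψ` (as a set of matrices). -/
noncomputable def uStab (d : Fin N → ℕ) (ψ : Idx d → ℂ) : Set (Matrix (Idx d) (Idx d) ℂ) :=
  {U | U ∈ Matrix.unitaryGroup (Idx d) ℂ ∧ U * proj d ψ * Uᴴ = proj d ψ}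

/-- The neighborhood unitary stabilizer group `U_{𝒩ₖ,ψ}` (as a set of matrices). -/
noncomputable def uNStab (d : Fin N → ℕ) (S : Finset (Fin N)) (ψ : Idx d → ℂ) :
    Set (Matrix (Idx d) (Idx d) ℂ) :=
  {U | (U ∈ Matrix.unitaryGroup (Idx d) ℂ ∧ U * proj d ψ * Uᴴ = proj d ψ) ∧ ActsOn d S U}

/-- `x log x` with the convention `0 log 0 = 0`. -/
noncomputable def entAux (x : ℝ) : ℝ := if x = 0 then 0 else x * Real.log x

open Classical in
/-- Von Neumann entropy of a (Hermitian) matrix. -/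
noncomputable def vnEntropy {n : Type*} [Fintype n] [DecidableEq n]
    (σ : Matrix n n ℂ) : ℝ :=
  if h : σ.IsHermitian then -∑ i, entAux (h.eigenvalues i) else 0



section GraphStates

variable {N : ℕ} (dq : ℕ)

/-- The edge-wise entangling unitary `U_G = ∏_{{i,j}∈E} C^H_{ij}` (a diagonal matrix). -/
noncomputable def graphUnitary (G : SimpleGraph (Fin N)) [DecidableRel G.Adj]
    (H : Matrix (Fin dq) (Fin dq) ℂ) :
    Matrix (Fin N → Fin dq) (Fin N → Fin dq) ℂ :=
  Matrix.diagonal fun a =>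
    ∏ p ∈ Finset.univ.filter (fun p : Fin N × Fin N => p.1 < p.2 ∧ G.Adj p.1 p.2),
      H (a p.1) (a p.2)

/-- The local state `|+⟩ = d^{-1/2} H e₀`. -/
noncomputable def plusVec (hd : 0 < dq) (H : Matrix (Fin dq) (Fin dq) ℂ) : Fin dq → ℂ :=
  fun x => H x ⟨0, hd⟩ / (Real.sqrt dq : ℂ)

/-- The graph state `|G⟩ = U_G |+⟩^{⊗N}`. -/
noncomputable def graphState (G : SimpleGraph (Fin N)) [DecidableRel G.Adj]
    (hd : 0 < dq) (H : Matrix (Fin dq) (Fin dq) ℂ) : (Fin N → Fin dq) → ℂ :=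
  (graphUnitary dq G H).mulVec fun a => ∏ i, plusVec dq hd H (a i)

open Classical in
/-- Kraus operators `(|+⟩⟨x|)ᵢ ⊗ I` of the map tracing out site `i` and re-preparing it
in `|+⟩`. -/
noncomputable def repKraus (hd : 0 < dq) (H : Matrix (Fin dq) (Fin dq) ℂ) (i : Fin N)
    (x : Fin dq) : Matrix (Fin N → Fin dq) (Fin N → Fin dq) ℂ :=
  fun a b => if (∀ l, l ≠ i → a l = b l) ∧ b i = x then plusVec dq hd H (a i) else 0

/-- Conjugation superoperator `ρ ↦ A ρ Aᴴ`. -/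
noncomputable def conjMap {ι : Type*} [Fintype ι] [DecidableEq ι] (A : Matrix ι ι ℂ) :
    Matrix ι ι ℂ →ₗ[ℂ] Matrix ι ι ℂ :=
  LinearMap.mulLeft ℂ A ∘ₗ LinearMap.mulRight ℂ Aᴴ

/-- The stabilizing neighborhood map `Eᵢ = 𝒰_G ∘ ((|+⟩⟨+| Tr)ᵢ ⊗ Id) ∘ 𝒰_G⁻¹`. -/
noncomputable def graphMap (G : SimpleGraph (Fin N)) [DecidableRel G.Adj]
    (hd : 0 < dq) (H : Matrix (Fin dq) (Fin dq) ℂ) (i : Fin N) :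
    Sop (fun _ : Fin N => dq) :=
  conjMap (graphUnitary dq G H) ∘ₗ
    (∑ x : Fin dq, LinearMap.mulLeft ℂ (repKraus dq hd H i x) ∘ₗ
      LinearMap.mulRight ℂ (repKraus dq hd H i x)ᴴ) ∘ₗ
    conjMap (graphUnitary dq G H)ᴴ

/-- The neighborhood of a vertex: the vertex together with its graph neighbors. -/
def graphNbhd (G : SimpleGraph (Fin N)) [DecidableRel G.Adj] (i : Fin N) :
    Finset (Fin N) :=
  insert i (G.neighborFinset i)

section AuxRFTS

variable {q : ℕ}

lemma conj_mul_of_abs_one {z : ℂ} (hz : ‖z‖ = 1) :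
    (starRingEnd ℂ) z * z = 1 := by
  have h : Complex.normSq z = 1 := by rw [Complex.normSq_eq_norm_sq, hz]; norm_num
  rw [mul_comm, Complex.mul_conj, h, Complex.ofReal_one]

lemma mul_conj_of_abs_one {z : ℂ} (hz : ‖z‖ = 1) :
    z * (starRingEnd ℂ) z = 1 := by
  rw [mul_comm]; exact conj_mul_of_abs_one hz

/-- Shorthand for the diagonal entries of the graph unitary. -/
noncomputable def gphase {n : ℕ} (G : SimpleGraph (Fin n)) [DecidableRel G.Adj]
    (H : Matrix (Fin q) (Fin q) ℂ) (a : Fin n → Fin q) : ℂ :=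
  ∏ p ∈ Finset.univ.filter (fun p : Fin n × Fin n => p.1 < p.2 ∧ G.Adj p.1 p.2),
      H (a p.1) (a p.2)

lemma graphUnitary_eq {n : ℕ} (G : SimpleGraph (Fin n)) [DecidableRel G.Adj]
    (H : Matrix (Fin q) (Fin q) ℂ) :
    graphUnitary q G H = Matrix.diagonal (gphase G H) := rfl

lemma gphase_conj_mul {n : ℕ} (G : SimpleGraph (Fin n)) [DecidableRel G.Adj]
    (H : Matrix (Fin q) (Fin q) ℂ) (hH3 : ∀ i j, ‖H i j‖ = 1)
    (a : Fin n → Fin q) :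
    (starRingEnd ℂ) (gphase G H a) * gphase G H a = 1 := by
  rw [gphase, map_prod, ← Finset.prod_mul_distrib]
  exact Finset.prod_eq_one fun p _ => conj_mul_of_abs_one (hH3 _ _)

lemma gU_left {n : ℕ} (G : SimpleGraph (Fin n)) [DecidableRel G.Adj]
    (H : Matrix (Fin q) (Fin q) ℂ) (hH3 : ∀ i j, ‖H i j‖ = 1) :
    (graphUnitary q G H)ᴴ * graphUnitary q G H = 1 := by
  rw [graphUnitary_eq, Matrix.diagonal_conjTranspose, Matrix.diagonal_mul_diagonal,
    ← Matrix.diagonal_one]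
  refine congrArg Matrix.diagonal (funext fun a => ?_)
  simpa using gphase_conj_mul G H hH3 a

lemma gU_right {n : ℕ} (G : SimpleGraph (Fin n)) [DecidableRel G.Adj]
    (H : Matrix (Fin q) (Fin q) ℂ) (hH3 : ∀ i j, ‖H i j‖ = 1) :
    graphUnitary q G H * (graphUnitary q G H)ᴴ = 1 := by
  rw [graphUnitary_eq, Matrix.diagonal_conjTranspose, Matrix.diagonal_mul_diagonal,
    ← Matrix.diagonal_one]
  refine congrArg Matrix.diagonal (funext fun a => ?_)
  simpa [mul_comm] using gphase_conj_mul G H hH3 a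

lemma plus_conj_mul (hd : 0 < q) (H : Matrix (Fin q) (Fin q) ℂ)
    (hH3 : ∀ i j, ‖H i j‖ = 1) (x : Fin q) :
    (starRingEnd ℂ) (plusVec q hd H x) * plusVec q hd H x = (q : ℂ)⁻¹ := by
  unfold plusVec
  rw [map_div₀, div_mul_div_comm, conj_mul_of_abs_one (hH3 _ _), Complex.conj_ofReal,
    ← Complex.ofReal_mul, Real.mul_self_sqrt (by positivity), one_div]
  norm_num

lemma plus_sum (hd : 0 < q) (H : Matrix (Fin q) (Fin q) ℂ)
    (hH3 : ∀ i j, ‖H i j‖ = 1) :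
    ∑ x : Fin q, plusVec q hd H x * (starRingEnd ℂ) (plusVec q hd H x) = 1 := by
  have h : ∀ x : Fin q, plusVec q hd H x * (starRingEnd ℂ) (plusVec q hd H x) = (q : ℂ)⁻¹ := by
    intro x; rw [mul_comm]; exact plus_conj_mul hd H hH3 x
  rw [Finset.sum_congr rfl fun x _ => h x, Finset.sum_const, Finset.card_univ,
    Fintype.card_fin, nsmul_eq_mul, mul_inv_cancel₀]
  exact_mod_cast hd.ne'

lemma conjMap_apply {ι : Type*} [Fintype ι] [DecidableEq ι] (A ρ : Matrix ι ι ℂ) :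
    conjMap A ρ = A * ρ * Aᴴ := by
  simp [conjMap, Matrix.mul_assoc]

lemma sandwich_cancel {ι : Type*} [Fintype ι] [DecidableEq ι] {U : Matrix ι ι ℂ}
    (hUl : Uᴴ * U = 1) (P : Matrix ι ι ℂ) : Uᴴ * (U * P * Uᴴ) * U = P := by
  calc Uᴴ * (U * P * Uᴴ) * U = (Uᴴ * U) * P * (Uᴴ * U) := by noncomm_ring
  _ = P := by rw [hUl, one_mul, mul_one]

/-- The repreparation channel at site `i` (in the rotated frame). -/
noncomputable def Fmap {n : ℕ} (hd : 0 < q) (H : Matrix (Fin q) (Fin q) ℂ) (i : Fin n) :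
    Sop (fun _ : Fin n => q) :=
  ∑ x : Fin q, LinearMap.mulLeft ℂ (repKraus q hd H i x) ∘ₗ
    LinearMap.mulRight ℂ (repKraus q hd H i x)ᴴ

lemma graphMap_eq {n : ℕ} (G : SimpleGraph (Fin n)) [DecidableRel G.Adj]
    (hd : 0 < q) (H : Matrix (Fin q) (Fin q) ℂ) (i : Fin n) :
    graphMap q G hd H i =
      conjMap (graphUnitary q G H) ∘ₗ Fmap hd H i ∘ₗ conjMap (graphUnitary q G H)ᴴ := rfl

lemma repKraus_eq {n : ℕ} (hd : 0 < q) (H : Matrix (Fin q) (Fin q) ℂ) (i : Fin n)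
    (x : Fin q) (a b : Fin n → Fin q) :
    repKraus q hd H i x a b =
      if b = Function.update a i x then plusVec q hd H (a i) else 0 := by
  unfold repKraus
  refine if_congr ?_ rfl rfl
  rw [Function.eq_update_iff]
  constructor
  · rintro ⟨h1, h2⟩; exact ⟨h2, fun l hl => (h1 l hl).symm⟩
  · rintro ⟨h2, h1⟩; exact ⟨fun l hl => (h1 l hl).symm, h2⟩

lemma Fmap_apply {n : ℕ} (hd : 0 < q) (H : Matrix (Fin q) (Fin q) ℂ) (i : Fin n)
    (ρ : Matrix (Fin n → Fin q) (Fin n → Fin q) ℂ) (a b : Fin n → Fin q) :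
    Fmap hd H i ρ a b = plusVec q hd H (a i) * (starRingEnd ℂ) (plusVec q hd H (b i)) *
      ∑ x : Fin q, ρ (Function.update a i x) (Function.update b i x) := by
  classical
  have key : ∀ x : Fin q,
      (repKraus q hd H i x * (ρ * (repKraus q hd H i x)ᴴ)) a b =
      plusVec q hd H (a i) * (starRingEnd ℂ) (plusVec q hd H (b i)) *
        ρ (Function.update a i x) (Function.update b i x) := by
    intro x
    have h2 : (ρ * (repKraus q hd H i x)ᴴ) (Function.update a i x) b =
        ρ (Function.update a i x) (Function.update b i x) *
          (starRingEnd ℂ) (plusVec q hd H (b i)) := by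
      rw [Matrix.mul_apply]
      have : ∀ e, ρ (Function.update a i x) e * (repKraus q hd H i x)ᴴ e b =
          if e = Function.update b i x then
            ρ (Function.update a i x) e * (starRingEnd ℂ) (plusVec q hd H (b i)) else 0 := by
        intro e
        rw [Matrix.conjTranspose_apply, repKraus_eq]
        split
        · rfl
        · simp
      rw [Finset.sum_congr rfl fun e _ => this e, Finset.sum_ite_eq' Finset.univ,
        if_pos (Finset.mem_univ _)]
    rw [Matrix.mul_apply]
    have : ∀ c, repKraus q hd H i x a c * (ρ * (repKraus q hd H i x)ᴴ) c b =
        if c = Function.update a i x then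
          plusVec q hd H (a i) * (ρ * (repKraus q hd H i x)ᴴ) c b else 0 := by
      intro c
      rw [repKraus_eq]
      split <;> simp
    rw [Finset.sum_congr rfl fun c _ => this c, Finset.sum_ite_eq' Finset.univ,
      if_pos (Finset.mem_univ _), h2]
    ring
  have : Fmap hd H i ρ a b =
      ∑ x : Fin q, (repKraus q hd H i x * (ρ * (repKraus q hd H i x)ᴴ)) a b := by
    rw [Fmap, LinearMap.sum_apply, Matrix.sum_apply]
    exact Finset.sum_congr rfl fun x _ => rfl
  rw [this, Finset.sum_congr rfl fun x _ => key x, ← Finset.mul_sum]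

lemma sum_pi_update {n : ℕ} (a : Fin n → Fin q) (i : Fin n)
    (h : (Fin n → Fin q) → ℂ) :
    ∑ c : Fin n → Fin q, (if ∀ l, l ≠ i → a l = c l then h c else 0)
      = ∑ y : Fin q, h (Function.update a i y) := by
  classical
  have himg : Finset.univ.filter (fun c : Fin n → Fin q => ∀ l, l ≠ i → a l = c l)
      = Finset.image (fun y => Function.update a i y) Finset.univ := by
    ext c
    simp only [Finset.mem_filter, Finset.mem_univ, true_and, Finset.mem_image]
    constructor
    · intro hc
      refine ⟨c i, funext fun l => ?_⟩
      rcases eq_or_ne l i with rfl | hl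
      · simp
      · simp [Function.update_of_ne hl, hc l hl]
    · rintro ⟨y, rfl⟩ l hl
      simp [Function.update_of_ne hl]
  rw [← Finset.sum_filter, himg, Finset.sum_image]
  intro y _ y' _ hyy
  have := congrFun hyy i
  simpa using this

lemma repKraus_sum {n : ℕ} (hd : 0 < q) (H : Matrix (Fin q) (Fin q) ℂ)
    (hH3 : ∀ i j, ‖H i j‖ = 1) (i : Fin n) :
    ∑ x : Fin q, (repKraus q hd H i x)ᴴ * repKraus q hd H i x = 1 := by
  classical
  ext a b
  rw [Matrix.sum_apply]
  have hentry : ∀ x, ((repKraus q hd H i x)ᴴ * repKraus q hd H i x) a b =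
      ∑ c : Fin n → Fin q,
        (if a = Function.update c i x then (starRingEnd ℂ) (plusVec q hd H (c i)) else 0) *
        (if b = Function.update c i x then plusVec q hd H (c i) else 0) := by
    intro x
    rw [Matrix.mul_apply]
    refine Finset.sum_congr rfl fun c _ => ?_
    rw [Matrix.conjTranspose_apply, repKraus_eq, repKraus_eq]
    split
    · rfl
    · simp
  rw [Finset.sum_congr rfl fun x _ => hentry x, Finset.sum_comm]
  have hcx : ∀ c : Fin n → Fin q, ∑ x : Fin q,
      (if a = Function.update c i x then (starRingEnd ℂ) (plusVec q hd H (c i)) else 0) *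
      (if b = Function.update c i x then plusVec q hd H (c i) else 0) =
      (if a = Function.update c i (a i) then (starRingEnd ℂ) (plusVec q hd H (c i)) else 0) *
      (if b = Function.update c i (a i) then plusVec q hd H (c i) else 0) := by
    intro c
    refine Finset.sum_eq_single_of_mem (a i) (Finset.mem_univ _) ?_
    intro x _ hx
    have : ¬ a = Function.update c i x := by
      intro hax
      exact hx (by rw [hax, Function.update_self])
    rw [if_neg this, zero_mul]
  rw [Finset.sum_congr rfl fun c _ => hcx c]
  rcases eq_or_ne a b with rfl | hab
  · have heq : ∀ c : Fin n → Fin q,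
        (if a = Function.update c i (a i) then (starRingEnd ℂ) (plusVec q hd H (c i)) else 0) *
        (if a = Function.update c i (a i) then plusVec q hd H (c i) else 0) =
        (if ∀ l, l ≠ i → a l = c l then
          (starRingEnd ℂ) (plusVec q hd H (c i)) * plusVec q hd H (c i) else 0) := by
      intro c
      have hiff : a = Function.update c i (a i) ↔ ∀ l, l ≠ i → a l = c l := by
        rw [Function.eq_update_iff]
        simp
      rw [if_congr hiff rfl rfl, if_congr hiff rfl rfl]
      split <;> simp
    rw [Finset.sum_congr rfl fun c _ => heq c, sum_pi_update]
    have : ∀ y : Fin q,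
        (starRingEnd ℂ) (plusVec q hd H (Function.update a i y i)) *
          plusVec q hd H (Function.update a i y i) = (q : ℂ)⁻¹ := by
      intro y
      rw [Function.update_self]
      exact plus_conj_mul hd H hH3 y
    rw [Finset.sum_congr rfl fun y _ => this y, Finset.sum_const, Finset.card_univ,
      Fintype.card_fin, nsmul_eq_mul, mul_inv_cancel₀ (by exact_mod_cast hd.ne'),
      Matrix.one_apply_eq]
  · rw [Matrix.one_apply_ne hab]
    refine Finset.sum_eq_zero fun c _ => ?_
    by_cases h1 : a = Function.update c i (a i)
    · by_cases h2 : b = Function.update c i (a i)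
      · exact absurd (h1.trans h2.symm) hab
      · rw [if_neg h2, mul_zero]
    · rw [if_neg h1, zero_mul]

lemma diag_sandwich {ι : Type*} [Fintype ι] [DecidableEq ι] (v : ι → ℂ)
    (M : Matrix ι ι ℂ) (a b : ι) :
    (Matrix.diagonal v * M * (Matrix.diagonal v)ᴴ) a b =
      v a * M a b * (starRingEnd ℂ) (v b) := by
  rw [Matrix.diagonal_conjTranspose, Matrix.mul_diagonal, Matrix.diagonal_mul]
  rfl

lemma merge_mem {n : ℕ} (d : Fin n → ℕ) (S : Finset (Fin n)) (u : SIdx d S)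
    (w : SIdx d Sᶜ) {l : Fin n} (h : l ∈ S) : merge d S u w l = u ⟨l, h⟩ := dif_pos h

lemma merge_not_mem {n : ℕ} (d : Fin n → ℕ) (S : Finset (Fin n)) (u : SIdx d S)
    (w : SIdx d Sᶜ) {l : Fin n} (h : l ∉ S) :
    merge d S u w l = w ⟨l, Finset.mem_compl.mpr h⟩ := dif_neg h

lemma actsOn_kraus {n : ℕ} (hd : 0 < q) (G : SimpleGraph (Fin n)) [DecidableRel G.Adj]
    (H : Matrix (Fin q) (Fin q) ℂ) (hH3 : ∀ i j, ‖H i j‖ = 1)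
    (i : Fin n) (x : Fin q) :
    ActsOn (fun _ : Fin n => q) (graphNbhd G i)
      (graphUnitary q G H * repKraus q hd H i x * (graphUnitary q G H)ᴴ) := by
  classical
  set d : Fin n → ℕ := fun _ => q with hdq
  set S : Finset (Fin n) := graphNbhd G i with hS
  have hiS : i ∈ S := Finset.mem_insert_self _ _
  set w0 : SIdx d Sᶜ := fun _ => (⟨0, hd⟩ : Fin q) with hw0
  have hentry : ∀ a b : Fin n → Fin q,
      (graphUnitary q G H * repKraus q hd H i x * (graphUnitary q G H)ᴴ) a b =
        gphase G H a * repKraus q hd H i x a b * (starRingEnd ℂ) (gphase G H b) := by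
    intro a b
    rw [graphUnitary_eq]
    exact diag_sandwich _ _ a b
  refine ⟨fun u u' =>
    (graphUnitary q G H * repKraus q hd H i x * (graphUnitary q G H)ᴴ)
      (merge d S u w0) (merge d S u' w0), ?_⟩
  intro u u' w w'
  rcases eq_or_ne w w' with rfl | hww
  · rw [if_pos rfl]
    show (graphUnitary q G H * repKraus q hd H i x * (graphUnitary q G H)ᴴ)
        (merge d S u w) (merge d S u' w) =
      (graphUnitary q G H * repKraus q hd H i x * (graphUnitary q G H)ᴴ)
        (merge d S u w0) (merge d S u' w0)
    set A := merge d S u w with hA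
    set B := merge d S u' w with hB
    set A0 := merge d S u w0 with hA0
    set B0 := merge d S u' w0 with hB0
    rw [hentry, hentry]
    -- the two off-`i` agreement conditions are equivalent
    have hcond : (∀ l, l ≠ i → A l = B l) ↔ (∀ l, l ≠ i → A0 l = B0 l) := by
      constructor
      · intro h l hl
        by_cases hlS : l ∈ S
        · rw [hA0, hB0, merge_mem d S u w0 hlS, merge_mem d S u' w0 hlS]
          have := h l hl
          rwa [hA, hB, merge_mem d S u w hlS, merge_mem d S u' w hlS] at this
        · rw [hA0, hB0, merge_not_mem d S u w0 hlS, merge_not_mem d S u' w0 hlS]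
      · intro h l hl
        by_cases hlS : l ∈ S
        · rw [hA, hB, merge_mem d S u w hlS, merge_mem d S u' w hlS]
          have := h l hl
          rwa [hA0, hB0, merge_mem d S u w0 hlS, merge_mem d S u' w0 hlS] at this
        · rw [hA, hB, merge_not_mem d S u w hlS, merge_not_mem d S u' w hlS]
    have hBi : B i = B0 i := by
      rw [hB, hB0, merge_mem d S u' w hiS, merge_mem d S u' w0 hiS]
    have hAi : A i = A0 i := by
      rw [hA, hA0, merge_mem d S u w hiS, merge_mem d S u w0 hiS]
    by_cases hC : ∀ l, l ≠ i → A l = B l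
    · have hC0 : ∀ l, l ≠ i → A0 l = B0 l := hcond.mp hC
      by_cases hx : B i = x
      · have hx0 : B0 i = x := by rw [← hBi]; exact hx
        rw [show repKraus q hd H i x A B = plusVec q hd H (A i) from if_pos ⟨hC, hx⟩,
          show repKraus q hd H i x A0 B0 = plusVec q hd H (A0 i) from if_pos ⟨hC0, hx0⟩,
          hAi]
        have hphase : gphase G H A * (starRingEnd ℂ) (gphase G H B) =
            gphase G H A0 * (starRingEnd ℂ) (gphase G H B0) := by
          rw [gphase, gphase, gphase, gphase, map_prod, map_prod,
            ← Finset.prod_mul_distrib, ← Finset.prod_mul_distrib]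
          refine Finset.prod_congr rfl fun p hp => ?_
          rw [Finset.mem_filter] at hp
          obtain ⟨-, hlt, hadj⟩ := hp
          by_cases hpi : p.1 = i ∨ p.2 = i
          · have hp1S : p.1 ∈ S ∧ p.2 ∈ S := by
              rcases hpi with h1 | h2
              · subst h1
                exact ⟨hiS, Finset.mem_insert_of_mem
                  ((SimpleGraph.mem_neighborFinset G p.1 p.2).mpr hadj)⟩
              · subst h2
                exact ⟨Finset.mem_insert_of_mem
                  ((SimpleGraph.mem_neighborFinset G p.2 p.1).mpr hadj.symm), hiS⟩
            rw [hA, hB, hA0, hB0, merge_mem d S u w hp1S.1, merge_mem d S u w hp1S.2,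
              merge_mem d S u' w hp1S.1, merge_mem d S u' w hp1S.2,
              merge_mem d S u w0 hp1S.1, merge_mem d S u w0 hp1S.2,
              merge_mem d S u' w0 hp1S.1, merge_mem d S u' w0 hp1S.2]
          · push_neg at hpi
            rw [hC p.1 hpi.1, hC p.2 hpi.2, hC0 p.1 hpi.1, hC0 p.2 hpi.2,
              mul_conj_of_abs_one (hH3 _ _), mul_conj_of_abs_one (hH3 _ _)]
        calc gphase G H A * plusVec q hd H (A0 i) * (starRingEnd ℂ) (gphase G H B)
            = plusVec q hd H (A0 i) * (gphase G H A * (starRingEnd ℂ) (gphase G H B)) := by ring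
          _ = plusVec q hd H (A0 i) * (gphase G H A0 * (starRingEnd ℂ) (gphase G H B0)) := by
              rw [hphase]
          _ = gphase G H A0 * plusVec q hd H (A0 i) * (starRingEnd ℂ) (gphase G H B0) := by ring
      · have hx0 : ¬ B0 i = x := by rw [← hBi]; exact hx
        rw [show repKraus q hd H i x A B = 0 from if_neg (fun h => hx h.2),
          show repKraus q hd H i x A0 B0 = 0 from if_neg (fun h => hx0 h.2)]
        ring
    · have hC0 : ¬ ∀ l, l ≠ i → A0 l = B0 l := fun h => hC (hcond.mpr h)
      rw [show repKraus q hd H i x A B = 0 from if_neg (fun h => hC h.1),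
        show repKraus q hd H i x A0 B0 = 0 from if_neg (fun h => hC0 h.1)]
      ring
  · rw [if_neg hww, hentry]
    obtain ⟨l, hl⟩ := Function.ne_iff.mp hww
    have hlS : (l : Fin n) ∉ S := Finset.mem_compl.mp l.2
    have hli : (l : Fin n) ≠ i := fun h => hlS (h ▸ hiS)
    have : repKraus q hd H i x (merge d S u w) (merge d S u' w') = 0 := by
      refine if_neg fun h => hl ?_
      have := h.1 l hli
      rwa [merge_not_mem d S u w hlS, merge_not_mem d S u' w' hlS] at this
    rw [this]
    ring

lemma proj_graphState {n : ℕ} (G : SimpleGraph (Fin n)) [DecidableRel G.Adj]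
    (hd : 0 < q) (H : Matrix (Fin q) (Fin q) ℂ) :
    proj (fun _ : Fin n => q) (graphState q G hd H) =
      graphUnitary q G H *
        proj (fun _ : Fin n => q) (fun a => ∏ i, plusVec q hd H (a i)) *
        (graphUnitary q G H)ᴴ := by
  funext a b
  rw [graphUnitary_eq, diag_sandwich]
  show graphState q G hd H a * (starRingEnd ℂ) (graphState q G hd H b) = _
  rw [graphState, graphUnitary_eq, Matrix.mulVec_diagonal, Matrix.mulVec_diagonal]
  show _ = gphase G H a * ((fun a => ∏ i, plusVec q hd H (a i)) a *
      (starRingEnd ℂ) ((fun a => ∏ i, plusVec q hd H (a i)) b)) * (starRingEnd ℂ) (gphase G H b)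
  simp only [map_mul]
  ring

lemma Fmap_fixes {n : ℕ} (hd : 0 < q) (H : Matrix (Fin q) (Fin q) ℂ)
    (hH3 : ∀ i j, ‖H i j‖ = 1) (i : Fin n) :
    Fmap hd H i (proj (fun _ : Fin n => q) (fun a => ∏ j, plusVec q hd H (a j))) =
      proj (fun _ : Fin n => q) (fun a => ∏ j, plusVec q hd H (a j)) := by
  classical
  funext a b
  rw [Fmap_apply]
  have hupd : ∀ (c : Fin n → Fin q) (x : Fin q),
      ∏ j, plusVec q hd H (Function.update c i x j) =
        plusVec q hd H x * ∏ j ∈ Finset.univ \ {i}, plusVec q hd H (c j) := by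
    intro c x
    have hj : ∀ j, plusVec q hd H (Function.update c i x j) =
        Function.update (fun j => plusVec q hd H (c j)) i (plusVec q hd H x) j :=
      fun j => Function.apply_update (fun _ v => plusVec q hd H v) c i x j
    rw [Finset.prod_congr rfl fun j _ => hj j,
      Finset.prod_update_of_mem (Finset.mem_univ i)]
  have hsum : ∑ x : Fin q,
      (proj (fun _ : Fin n => q) (fun c => ∏ j, plusVec q hd H (c j)))
        (Function.update a i x) (Function.update b i x) =
      (∏ j ∈ Finset.univ \ {i}, plusVec q hd H (a j)) *
        (starRingEnd ℂ) (∏ j ∈ Finset.univ \ {i}, plusVec q hd H (b j)) := by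
    have : ∀ x : Fin q,
        (proj (fun _ : Fin n => q) (fun c => ∏ j, plusVec q hd H (c j)))
          (Function.update a i x) (Function.update b i x) =
        (plusVec q hd H x * (starRingEnd ℂ) (plusVec q hd H x)) *
          ((∏ j ∈ Finset.univ \ {i}, plusVec q hd H (a j)) *
            (starRingEnd ℂ) (∏ j ∈ Finset.univ \ {i}, plusVec q hd H (b j))) := by
      intro x
      show (∏ j, plusVec q hd H (Function.update a i x j)) *
        (starRingEnd ℂ) (∏ j, plusVec q hd H (Function.update b i x j)) = _
      rw [hupd, hupd, map_mul]
      ring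
    rw [Finset.sum_congr rfl fun x _ => this x, ← Finset.sum_mul, plus_sum hd H hH3, one_mul]
  rw [hsum]
  show _ = (∏ j, plusVec q hd H (a j)) * (starRingEnd ℂ) (∏ j, plusVec q hd H (b j))
  rw [Finset.prod_eq_mul_prod_sdiff_singleton_of_mem (Finset.mem_univ i) (fun j => plusVec q hd H (a j)),
    Finset.prod_eq_mul_prod_sdiff_singleton_of_mem (Finset.mem_univ i) (fun j => plusVec q hd H (b j)),
    map_mul]
  ring

open Classical in
/-- Override the values of `a` along the range of `f` using `g`. -/
noncomputable def ovf {n k : ℕ} (f : Fin k → Fin n) (g : Fin k → Fin q)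
    (a : Fin n → Fin q) : Fin n → Fin q :=
  fun l => if h : ∃ t, f t = l then g h.choose else a l

lemma ovf_apply_eq {n k : ℕ} {f : Fin k → Fin n} (hf : Function.Injective f)
    (g : Fin k → Fin q) (a : Fin n → Fin q) {t : Fin k} {l : Fin n} (ht : f t = l) :
    ovf f g a l = g t := by
  rw [ovf, dif_pos ⟨t, ht⟩]
  congr 1
  exact hf ((⟨t, ht⟩ : ∃ t, f t = l).choose_spec.trans ht.symm)

lemma ovf_apply_ne {n k : ℕ} {f : Fin k → Fin n} (g : Fin k → Fin q)
    (a : Fin n → Fin q) {l : Fin n} (h : ∀ t, f t ≠ l) :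
    ovf f g a l = a l := by
  rw [ovf, dif_neg]
  rintro ⟨t, ht⟩
  exact h t ht

lemma ovf_snoc {n k : ℕ} (f : Fin (k + 1) → Fin n) (hf : Function.Injective f)
    (g : Fin k → Fin q) (x : Fin q) (a : Fin n → Fin q) :
    ovf (fun t : Fin k => f t.castSucc) g (Function.update a (f (Fin.last k)) x)
      = ovf f (Fin.snoc g x) a := by
  have hf' : Function.Injective (fun t : Fin k => f t.castSucc) :=
    fun s t h => Fin.castSucc_injective _ (hf h)
  funext l
  by_cases h1 : ∃ t : Fin k, f t.castSucc = l
  · obtain ⟨t, ht⟩ := h1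
    rw [ovf_apply_eq hf' g _ ht, ovf_apply_eq hf (Fin.snoc g x) a ht, Fin.snoc_castSucc]
  · push_neg at h1
    by_cases h2 : f (Fin.last k) = l
    · rw [ovf_apply_eq hf (Fin.snoc g x) a h2, Fin.snoc_last,
        ovf_apply_ne g _ h1, ← h2, Function.update_self]
    · rw [ovf_apply_ne g _ h1, ovf_apply_ne (Fin.snoc g x) a ?hne,
        Function.update_of_ne (fun hll => h2 hll.symm)]
      case hne =>
        intro t
        refine Fin.lastCases ?_ ?_ t
        · exact h2
        · exact fun s => h1 s

lemma seq_formula {n : ℕ} (hd : 0 < q) (H : Matrix (Fin q) (Fin q) ℂ) :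
    ∀ (k : ℕ) (f : Fin k → Fin n), Function.Injective f →
    ∀ (ρ : Matrix (Fin n → Fin q) (Fin n → Fin q) ℂ) (a b : Fin n → Fin q),
    (seqComp (fun t => Fmap hd H (f t)) ρ) a b
      = (∏ j ∈ Finset.image f Finset.univ,
          (plusVec q hd H (a j) * (starRingEnd ℂ) (plusVec q hd H (b j))))
        * ∑ g : Fin k → Fin q, ρ (ovf f g a) (ovf f g b) := by
  intro k
  induction k with
  | zero =>
    intro f hf ρ a b
    have h1 : ∀ g : Fin 0 → Fin q, ovf f g a = a := by
      intro g; funext l; exact ovf_apply_ne g a (fun t => t.elim0)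
    have h2 : ∀ g : Fin 0 → Fin q, ovf f g b = b := by
      intro g; funext l; exact ovf_apply_ne g b (fun t => t.elim0)
    have himg : Finset.image f Finset.univ = ∅ := by simp
    rw [himg, Finset.prod_empty, one_mul]
    show ρ a b = _
    rw [Finset.sum_congr rfl fun g _ => by rw [h1 g, h2 g]]
    rw [Finset.sum_const, Finset.card_univ]
    have : Fintype.card (Fin 0 → Fin q) = 1 := by simp
    rw [this, one_smul]
  | succ k ih =>
    intro f hf ρ a b
    have hf' : Function.Injective (fun t : Fin k => f t.castSucc) :=
      fun s t h => Fin.castSucc_injective _ (hf h)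
    set j := f (Fin.last k) with hj
    have hjimg : j ∉ Finset.image (fun t : Fin k => f t.castSucc) Finset.univ := by
      simp only [Finset.mem_image, Finset.mem_univ, true_and]
      rintro ⟨t, ht⟩
      exact absurd (hf ht) (Fin.castSucc_lt_last t).ne
    have himg : Finset.image f Finset.univ =
        insert j (Finset.image (fun t : Fin k => f t.castSucc) Finset.univ) := by
      ext y
      simp only [Finset.mem_image, Finset.mem_univ, true_and, Finset.mem_insert]
      constructor
      · rintro ⟨t, rfl⟩
        refine Fin.lastCases ?_ ?_ t
        · exact Or.inl rfl
        · exact fun s => Or.inr ⟨s, rfl⟩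
      · rintro (rfl | ⟨s, rfl⟩)
        · exact ⟨Fin.last k, rfl⟩
        · exact ⟨s.castSucc, rfl⟩
    show (Fmap hd H j) ((seqComp fun t : Fin k => Fmap hd H (f t.castSucc)) ρ) a b = _
    rw [Fmap_apply]
    have hsummand : ∀ x : Fin q,
        (seqComp fun t : Fin k => Fmap hd H (f t.castSucc)) ρ
          (Function.update a j x) (Function.update b j x)
        = (∏ i ∈ Finset.image (fun t : Fin k => f t.castSucc) Finset.univ,
            (plusVec q hd H (a i) * (starRingEnd ℂ) (plusVec q hd H (b i))))
          * ∑ g : Fin k → Fin q, ρ (ovf f (Fin.snoc g x) a) (ovf f (Fin.snoc g x) b) := by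
      intro x
      rw [ih _ hf' ρ (Function.update a j x) (Function.update b j x)]
      congr 1
      · refine Finset.prod_congr rfl fun i hi => ?_
        have hij : i ≠ j := fun h => hjimg (h ▸ hi)
        rw [Function.update_of_ne hij, Function.update_of_ne hij]
      · refine Finset.sum_congr rfl fun g _ => ?_
        rw [ovf_snoc f hf g x a, ovf_snoc f hf g x b]
    rw [Finset.sum_congr rfl fun x _ => hsummand x, ← Finset.mul_sum]
    have hdouble : ∑ x : Fin q, ∑ g : Fin k → Fin q,
        ρ (ovf f (Fin.snoc g x) a) (ovf f (Fin.snoc g x) b)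
        = ∑ g : Fin (k + 1) → Fin q, ρ (ovf f g a) (ovf f g b) := by
      rw [← Equiv.sum_comp (Fin.snocEquiv (fun _ => Fin q))
        (fun g => ρ (ovf f g a) (ovf f g b)), Fintype.sum_prod_type]
      rfl
    rw [hdouble, himg, Finset.prod_insert hjimg]
    ring

lemma seq_conv {n : ℕ} (hd : 0 < q) (H : Matrix (Fin q) (Fin q) ℂ)
    (hH3 : ∀ i j, ‖H i j‖ = 1) (π : Equiv.Perm (Fin n))
    (ρ : Matrix (Fin n → Fin q) (Fin n → Fin q) ℂ) (hρ : ρ.trace = 1) :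
    seqComp (fun t => Fmap hd H (π t)) ρ =
      proj (fun _ : Fin n => q) (fun a => ∏ i, plusVec q hd H (a i)) := by
  funext a b
  rw [seq_formula hd H n π π.injective ρ a b]
  have himg : Finset.image (⇑π) Finset.univ = Finset.univ :=
    Finset.image_univ_of_surjective π.surjective
  have hovf : ∀ (g : Fin n → Fin q) (c : Fin n → Fin q),
      ovf (⇑π) g c = fun l => g (π.symm l) := by
    intro g c
    funext l
    exact ovf_apply_eq π.injective g c (π.apply_symm_apply l)
  have hsum : ∑ g : Fin n → Fin q, ρ (ovf (⇑π) g a) (ovf (⇑π) g b) = 1 := by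
    have h1 : ∀ g : Fin n → Fin q, ρ (ovf (⇑π) g a) (ovf (⇑π) g b) =
        ρ (fun l => g (π.symm l)) (fun l => g (π.symm l)) := by
      intro g; rw [hovf g a, hovf g b]
    rw [Finset.sum_congr rfl fun g _ => h1 g]
    have h2 : ∑ g : Fin n → Fin q, ρ (fun l => g (π.symm l)) (fun l => g (π.symm l))
        = ∑ h : Fin n → Fin q, ρ h h := by
      exact Equiv.sum_comp (Equiv.arrowCongr π (Equiv.refl (Fin q))) (fun h => ρ h h)
    rw [h2, ← hρ]
    rfl
  rw [himg, hsum, mul_one]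
  show _ = (∏ i, plusVec q hd H (a i)) * (starRingEnd ℂ) (∏ i, plusVec q hd H (b i))
  rw [map_prod, ← Finset.prod_mul_distrib]

lemma seqComp_conj {ι : Type*} [Fintype ι] [DecidableEq ι] {U : Matrix ι ι ℂ}
    (hUl : Uᴴ * U = 1) (hUr : U * Uᴴ = 1) :
    ∀ {T : ℕ} (M : Fin T → (Matrix ι ι ℂ →ₗ[ℂ] Matrix ι ι ℂ)),
      seqComp (fun t => conjMap U ∘ₗ M t ∘ₗ conjMap Uᴴ)
        = conjMap U ∘ₗ seqComp M ∘ₗ conjMap Uᴴ := by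
  intro T
  induction T with
  | zero =>
    intro M
    refine LinearMap.ext fun ρ => ?_
    show ρ = conjMap U (conjMap Uᴴ ρ)
    rw [conjMap_apply, conjMap_apply, Matrix.conjTranspose_conjTranspose]
    calc ρ = (U * Uᴴ) * ρ * (U * Uᴴ) := by rw [hUr, one_mul, mul_one]
    _ = U * (Uᴴ * ρ * U) * Uᴴ := by noncomm_ring
  | succ T ih =>
    intro M
    refine LinearMap.ext fun ρ => ?_
    show (conjMap U ∘ₗ M (Fin.last T) ∘ₗ conjMap Uᴴ)
        ((seqComp fun t => conjMap U ∘ₗ M t.castSucc ∘ₗ conjMap Uᴴ) ρ) =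
      conjMap U ((M (Fin.last T)) ((seqComp fun t => M t.castSucc) (conjMap Uᴴ ρ)))
    rw [ih (fun t => M t.castSucc)]
    simp only [LinearMap.comp_apply]
    congr 1
    congr 1
    rw [conjMap_apply U, conjMap_apply Uᴴ, Matrix.conjTranspose_conjTranspose,
      sandwich_cancel hUl]

end AuxRFTS

/-- graph states are RFTS: for a Hadamard matrix `H` and graph `G`,
the graph state `|G⟩` is robustly finite-time stabilized by the maps
`Eᵢ = 𝒰_G ∘ ((|+⟩⟨+|Tr)ᵢ ⊗ Id) ∘ 𝒰_G⁻¹`: each `Eᵢ` is a neighborhood map on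
`𝒩ᵢ = {i} ∪ ∂i`, each leaves `|G⟩⟨G|` invariant, and any ordering of `E_1, …, E_N`
maps every density matrix to `|G⟩⟨G|`; in particular `|G⟩` is RFTS w.r.t. `𝒩`. -/
theorem graph_state_rfts {N dq : ℕ} (hd : 0 < dq)
    (G : SimpleGraph (Fin N)) [DecidableRel G.Adj]
    (H : Matrix (Fin dq) (Fin dq) ℂ)
    (hH1 : Hᴴ * H = (dq : ℂ) • 1) (hH2 : Hᵀ = H)
    (hH3 : ∀ i j, ‖H i j‖ = 1) :
    (∀ i, IsNeighborhoodMap (fun _ : Fin N => dq) (graphNbhd G i)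
        (graphMap dq G hd H i)) ∧
    (∀ i, graphMap dq G hd H i (proj (fun _ : Fin N => dq) (graphState dq G hd H)) =
        proj (fun _ : Fin N => dq) (graphState dq G hd H)) ∧
    (∀ π : Equiv.Perm (Fin N), ∀ σ, IsDensity (fun _ : Fin N => dq) σ →
        seqComp (fun t => graphMap dq G hd H (π t)) σ =
          proj (fun _ : Fin N => dq) (graphState dq G hd H)) ∧
    RFTS (fun _ : Fin N => dq) (graphNbhd G) (graphState dq G hd H) := by
  classical
  have hUl : (graphUnitary dq G H)ᴴ * graphUnitary dq G H = 1 := gU_left G H hH3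
  have hUr : graphUnitary dq G H * (graphUnitary dq G H)ᴴ = 1 := gU_right G H hH3
  have hproj := proj_graphState G hd H
  have partA : ∀ i, IsNeighborhoodMap (fun _ : Fin N => dq) (graphNbhd G i)
      (graphMap dq G hd H i) := by
    intro i
    refine ⟨dq, fun x => graphUnitary dq G H * repKraus dq hd H i x * (graphUnitary dq G H)ᴴ,
      fun x => actsOn_kraus hd G H hH3 i x, ?_, ?_⟩
    · intro ρ
      rw [graphMap_eq]
      simp only [LinearMap.comp_apply, conjMap_apply, Fmap, LinearMap.sum_apply,
        LinearMap.mulLeft_apply, LinearMap.mulRight_apply,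
        Matrix.conjTranspose_conjTranspose, Matrix.conjTranspose_mul]
      rw [Matrix.mul_sum, Matrix.sum_mul]
      refine Finset.sum_congr rfl fun x _ => ?_
      simp only [Matrix.mul_assoc]
    · have hx : ∀ x : Fin dq,
          (graphUnitary dq G H * repKraus dq hd H i x * (graphUnitary dq G H)ᴴ)ᴴ *
            (graphUnitary dq G H * repKraus dq hd H i x * (graphUnitary dq G H)ᴴ)
          = graphUnitary dq G H * ((repKraus dq hd H i x)ᴴ * repKraus dq hd H i x) *
              (graphUnitary dq G H)ᴴ := by
        intro x
        simp only [Matrix.conjTranspose_mul, Matrix.conjTranspose_conjTranspose]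
        calc graphUnitary dq G H * ((repKraus dq hd H i x)ᴴ * (graphUnitary dq G H)ᴴ) *
              (graphUnitary dq G H * repKraus dq hd H i x * (graphUnitary dq G H)ᴴ)
            = graphUnitary dq G H * (repKraus dq hd H i x)ᴴ *
                ((graphUnitary dq G H)ᴴ * graphUnitary dq G H) *
                repKraus dq hd H i x * (graphUnitary dq G H)ᴴ := by noncomm_ring
          _ = graphUnitary dq G H * ((repKraus dq hd H i x)ᴴ * repKraus dq hd H i x) *
                (graphUnitary dq G H)ᴴ := by rw [hUl, mul_one]; noncomm_ring
      rw [Finset.sum_congr rfl fun x _ => hx x, ← Finset.sum_mul, ← Matrix.mul_sum,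
        repKraus_sum hd H hH3 i, Matrix.mul_one, hUr]
  have partB : ∀ i, graphMap dq G hd H i
      (proj (fun _ : Fin N => dq) (graphState dq G hd H)) =
      proj (fun _ : Fin N => dq) (graphState dq G hd H) := by
    intro i
    rw [graphMap_eq]
    show conjMap (graphUnitary dq G H) ((Fmap hd H i) (conjMap (graphUnitary dq G H)ᴴ
      (proj (fun _ : Fin N => dq) (graphState dq G hd H)))) = _
    rw [hproj, conjMap_apply (graphUnitary dq G H)ᴴ, Matrix.conjTranspose_conjTranspose,
      sandwich_cancel hUl,
      Fmap_fixes hd H hH3 i, conjMap_apply]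
  have partC : ∀ π : Equiv.Perm (Fin N), ∀ σ, IsDensity (fun _ : Fin N => dq) σ →
      seqComp (fun t => graphMap dq G hd H (π t)) σ =
        proj (fun _ : Fin N => dq) (graphState dq G hd H) := by
    intro π σ hσ
    have h1 : (fun t : Fin N => graphMap dq G hd H (π t)) =
        fun t => conjMap (graphUnitary dq G H) ∘ₗ Fmap hd H (π t) ∘ₗ
          conjMap (graphUnitary dq G H)ᴴ :=
      funext fun t => graphMap_eq G hd H (π t)
    rw [h1, seqComp_conj hUl hUr]
    simp only [LinearMap.comp_apply]
    have htr : (conjMap (graphUnitary dq G H)ᴴ σ).trace = 1 := by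
      rw [conjMap_apply, Matrix.conjTranspose_conjTranspose, Matrix.trace_mul_cycle,
        hUr, one_mul, hσ.2]
    rw [seq_conv hd H hH3 π _ htr, conjMap_apply]
    exact hproj.symm
  exact ⟨partA, partB, partC,
    ⟨N, graphMap dq G hd H, fun t => ⟨t, partA t⟩, partB, fun π σ hσ => partC π σ hσ⟩⟩

end GraphStates

end QLS
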